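/- Let n be a positive integer, let 1 ≥ a_1 ≥ a_2 ≥ ⋯ ≥ a_n > 0 be a nonincreasing sequence of real numbers, and define s_0 = 0 and, recursively for i ≥ 1, k_i = min{ k ≥ 1 : s_{i-1} + k ≤ n and a_{s_{i-1}+k} > 2^{1−k} } and s_i = s_{i-1} + k_i, with m the largest index for which this minimum exists. For any 1 ≤ r ≤ m, let f : {0,1}^n → {0,1} be the tribes function f(x) = ⋁_{i=1}^{r} ⋀_{j=1}^{k_i} x_{s_{i-1}+j}. Then Inf_j[f] < a_j for every 1 ≤ j ≤ n. -/

import Mathlib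

/-- The `j`-th coordinate of `x ∈ {0,1}^n`, with coordinates numbered `1, …, n`
(out-of-range coordinates default to `false`). -/
def coord {n : ℕ} (x : Fin n → Bool) (j : ℕ) : Bool :=
  if h : j - 1 < n then x ⟨j - 1, h⟩ else false

/-- The tribes function with tribe sizes `k_1, …, k_r`:
`f(x) = ⋁_{i=1}^r ⋀_{j=1}^{k_i} x_{s_{i-1}+j}` where `s_i = k_1 + ⋯ + k_i`. -/
noncomputable def tribesFn (n r : ℕ) (k : ℕ → ℕ) : (Fin n → Bool) → Bool := fun x =>
  (Finset.Icc 1 r).sup fun i => (Finset.Icc 1 (k i)).inf fun j =>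
    coord x ((∑ l ∈ Finset.Icc 1 (i - 1), k l) + j)

/-- The vector `x` with the coordinate `j` flipped. -/
def flipCoord (n : ℕ) (j : Fin n) (x : Fin n → Bool) : Fin n → Bool :=
  Function.update x j (!x j)

/-- The influence `Inf_j[f] = Pr[f(x) ≠ f(x^j)]` of the `j`-th variable on `f`,
for a uniformly random `x ∈ {0,1}^n`. -/
noncomputable def influence (n : ℕ) (f : (Fin n → Bool) → Bool) (j : Fin n) : ℝ :=
  ((Finset.univ.filter fun x : Fin n → Bool => f x ≠ f (flipCoord n j x)).card : ℝ) / 2 ^ n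

lemma coord_flip {n : ℕ} (j : Fin n) (x : Fin n → Bool) (idx : ℕ)
    (h1 : 1 ≤ idx) (h : idx ≠ (j : ℕ) + 1) :
    coord (flipCoord n j x) idx = coord x idx := by
  unfold coord flipCoord
  split_ifs with hlt
  · rw [Function.update_of_ne]
    intro heq
    have := congrArg Fin.val heq
    simp at this
    omega
  · rfl

lemma coord_eq {n : ℕ} (x : Fin n → Bool) (idx : ℕ) (h1 : 1 ≤ idx) (h2 : idx ≤ n) :
    coord x idx = x ⟨idx - 1, by omega⟩ := by
  unfold coord; rw [dif_pos]

lemma count_all_true (n : ℕ) (T : Finset (Fin n)) :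
    (Finset.univ.filter fun x : Fin n → Bool => ∀ q ∈ T, x q = true).card
      = 2 ^ (n - T.card) := by
  have e : {x : Fin n → Bool // ∀ q ∈ T, x q = true} ≃ ((Tᶜ : Finset (Fin n)) → Bool) :=
    { toFun := fun x g => x.1 g.1
      invFun := fun g => ⟨fun q => if h : q ∈ T then true else g ⟨q, by simpa using h⟩,
        fun q hq => by simp [hq]⟩
      left_inv := by
        rintro ⟨x, hx⟩
        ext q
        by_cases h : q ∈ T
        · simp [h, hx q h]
        · simp [h]
      right_inv := by
        intro g
        ext ⟨q, hq⟩
        have h : q ∉ T := by simpa using hq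
        simp [h] }
  have := Fintype.card_congr e
  rw [Fintype.card_subtype] at this
  rw [this]
  simp [Finset.card_compl]

lemma card_block (n a b : ℕ) (hb : b ≤ n) :
    (Finset.univ.filter fun q : Fin n => a ≤ (q : ℕ) ∧ (q : ℕ) < b).card = b - a := by
  have h : ∀ m ∈ Finset.Ico a b, m < n := by
    intro m hm; simp only [Finset.mem_Ico] at hm; omega
  have : (Finset.univ.filter fun q : Fin n => a ≤ (q : ℕ) ∧ (q : ℕ) < b)
      = (Finset.Ico a b).attachFin h := by
    ext q
    simp [Finset.mem_attachFin, Finset.mem_Ico]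
  rw [this, Finset.card_attachFin, Nat.card_Ico]


/-- **The tribes function built from the greedy tribe sizes has small influences.**
Let `1 ≥ a_1 ≥ ⋯ ≥ a_n > 0`. With `s_0 = 0`,
`k_i = min{ k ≥ 1 : s_{i-1} + k ≤ n and a_{s_{i-1}+k} > 2^{1-k} }`, `s_i = s_{i-1} + k_i`,
and `m` the largest index for which this minimum exists, for any `1 ≤ r ≤ m` the tribes
function `f` with tribe sizes `k_1, …, k_r` satisfies `Inf_j[f] < a_j` for all `1 ≤ j ≤ n`
(below `j : Fin n` is a `0`-based coordinate, so its `1`-based index is `j + 1`). -/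
theorem tribes_influence_lt (n : ℕ) (hn : 1 ≤ n) (a : ℕ → ℝ)
    (ha : ∀ j, 1 ≤ j → j ≤ n → 0 < a j ∧ a j ≤ 1)
    (hmono : ∀ j, 1 ≤ j → j < n → a (j + 1) ≤ a j)
    (m : ℕ) (k s : ℕ → ℕ) (hs0 : s 0 = 0)
    (hk : ∀ i, 1 ≤ i → i ≤ m →
      IsLeast {t : ℕ | 1 ≤ t ∧ s (i - 1) + t ≤ n ∧
        (2 : ℝ) ^ (1 - (t : ℤ)) < a (s (i - 1) + t)} (k i))
    (hs : ∀ i, 1 ≤ i → i ≤ m → s i = s (i - 1) + k i)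
    (hm : ¬ ∃ t : ℕ, 1 ≤ t ∧ s m + t ≤ n ∧ (2 : ℝ) ^ (1 - (t : ℤ)) < a (s m + t))
    (r : ℕ) (hr1 : 1 ≤ r) (hrm : r ≤ m) :
    ∀ j : Fin n, influence n (tribesFn n r k) j < a ((j : ℕ) + 1) := by
  classical
  -- basic structural facts
  have hsum : ∀ i, i ≤ m → ∑ l ∈ Finset.Icc 1 i, k l = s i := by
    intro i
    induction i with
    | zero => intro _; simp [hs0]
    | succ i ih =>
      intro h
      rw [Finset.sum_Icc_succ_top (by omega), ih (by omega), hs (i + 1) (by omega) h]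
      simp
  have hsmono : ∀ i₁ i₂, i₁ ≤ i₂ → i₂ ≤ m → s i₁ ≤ s i₂ := by
    intro i₁ i₂ h12 h2m
    induction i₂ with
    | zero =>
      have h0 : i₁ = 0 := by omega
      rw [h0]
    | succ i₂ ih =>
      rcases Nat.lt_or_ge i₁ (i₂ + 1) with h | h
      · have h1 := hs (i₂ + 1) (by omega) h2m
        simp only [Nat.add_sub_cancel] at h1
        have := ih (by omega) (by omega)
        omega
      · have : i₁ = i₂ + 1 := by omega
        simp [this]
  have hamono : ∀ p q, 1 ≤ p → p ≤ q → q ≤ n → a q ≤ a p := by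
    intro p q h1 h2 h3
    induction q with
    | zero => omega
    | succ q ih =>
      rcases Nat.lt_or_ge p (q + 1) with h | h
      · exact le_trans (hmono q (by omega) (by omega)) (ih (by omega) (by omega))
      · have : p = q + 1 := by omega
        rw [this]
  intro j
  by_cases hcase : s r < (j : ℕ) + 1
  · -- coordinate j is not read by the function
    have hzero : ∀ x : Fin n → Bool,
        tribesFn n r k x = tribesFn n r k (flipCoord n j x) := by
      intro x
      unfold tribesFn
      apply Finset.sup_congr rfl
      intro i hi
      apply Finset.inf_congr rfl
      intro jj hjj
      simp only [Finset.mem_Icc] at hi hjj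
      rw [hsum (i - 1) (by omega)]
      refine (coord_flip j x _ (by omega) ?_).symm
      have h1 := hs i hi.1 (le_trans hi.2 hrm)
      have h2 := hsmono i r hi.2 hrm
      omega
    have hempty : (Finset.univ.filter fun x : Fin n → Bool =>
        tribesFn n r k x ≠ tribesFn n r k (flipCoord n j x)) = ∅ := by
      apply Finset.filter_eq_empty_iff.2
      intro x _
      simp [hzero x]
    unfold influence
    rw [hempty]
    simp only [Finset.card_empty, Nat.cast_zero, zero_div]
    exact (ha ((j : ℕ) + 1) (by omega) (by omega)).1
  · push_neg at hcase
    -- find the tribe i containing coordinate j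
    have hex : ∃ i, (j : ℕ) + 1 ≤ s i := ⟨r, hcase⟩
    set i := Nat.find hex with hidef
    have hip : (j : ℕ) + 1 ≤ s i := Nat.find_spec hex
    have hir : i ≤ r := Nat.find_min' hex hcase
    have hi1 : 1 ≤ i := by
      by_contra h
      have h0 : i = 0 := by omega
      rw [h0, hs0] at hip; omega
    have him : i ≤ m := le_trans hir hrm
    have hprev : s (i - 1) < (j : ℕ) + 1 := by
      have := Nat.find_min hex (show i - 1 < i by omega)
      omega
    set K := k i with hKdef'
    have hKls := hk i hi1 him
    have hK1 : 1 ≤ K := hKls.1.1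
    have hsi : s i = s (i - 1) + K := hs i hi1 him
    have hsin : s i ≤ n := by rw [hsi]; exact hKls.1.2.1
    have hstrict : (2 : ℝ) ^ (1 - (K : ℤ)) < a (s i) := by
      rw [hsi]; exact hKls.1.2.2
    -- the set of block coordinates other than j
    set B : Finset (Fin n) :=
      Finset.univ.filter (fun q : Fin n => s (i - 1) ≤ (q : ℕ) ∧ (q : ℕ) < s i) with hBdef
    set T : Finset (Fin n) := B.erase j with hTdef
    have hjB : j ∈ B := by
      rw [hBdef]; simp only [Finset.mem_filter, Finset.mem_univ, true_and]; omega
    have hTcard : T.card = K - 1 := by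
      rw [hTdef, Finset.card_erase_of_mem hjB, hBdef, card_block n _ _ hsin]
      omega
    -- key claim: if f changes under flipping j, all other block coordinates are true
    have hsub : (Finset.univ.filter fun x : Fin n → Bool =>
          tribesFn n r k x ≠ tribesFn n r k (flipCoord n j x)) ⊆
        Finset.univ.filter fun x : Fin n → Bool => ∀ q ∈ T, x q = true := by
      intro x hx
      simp only [Finset.mem_filter, Finset.mem_univ, true_and] at hx ⊢
      intro q hq
      by_contra hq0'
      have hq0 : x q = false := by simpa using hq0'
      apply hx
      obtain ⟨hqj, hqB⟩ := Finset.mem_erase.1 hq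
      rw [hBdef] at hqB
      simp only [Finset.mem_filter, Finset.mem_univ, true_and] at hqB
      have hqj' : (q : ℕ) ≠ (j : ℕ) := fun h => hqj (Fin.ext h)
      unfold tribesFn
      apply Finset.sup_congr rfl
      intro i' hi'
      simp only [Finset.mem_Icc] at hi'
      rw [hsum (i' - 1) (by omega)]
      by_cases hii : i' = i
      · -- tribe i : both infimums are false since x q = false
        subst hii
        set jj := (q : ℕ) + 1 - s (i - 1) with hjjdef
        have hjjm : jj ∈ Finset.Icc 1 (k i) := by
          simp only [Finset.mem_Icc]
          omega
        have hidx : s (i - 1) + jj = (q : ℕ) + 1 := by omega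
        have hfq : (⟨(q : ℕ) + 1 - 1, by omega⟩ : Fin n) = q := by
          ext; simp
        have hcx : coord x (s (i - 1) + jj) = false := by
          rw [hidx, coord_eq x _ (by omega) (by omega), hfq, hq0]
        have hcx' : coord (flipCoord n j x) (s (i - 1) + jj) = false := by
          rw [coord_flip j x _ (by omega) (by omega), hcx]
        have hA : ((Finset.Icc 1 (k i)).inf fun jj => coord x (s (i - 1) + jj)) = false := by
          have h1 := Finset.inf_le (f := fun jj => coord x (s (i - 1) + jj)) hjjm
          simp only [hcx] at h1
          exact le_antisymm h1 (Bool.false_le _)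
        have hB' : ((Finset.Icc 1 (k i)).inf
            fun jj => coord (flipCoord n j x) (s (i - 1) + jj)) = false := by
          have h1 := Finset.inf_le
            (f := fun jj => coord (flipCoord n j x) (s (i - 1) + jj)) hjjm
          simp only [hcx'] at h1
          exact le_antisymm h1 (Bool.false_le _)
        rw [hA, hB']
      · -- other tribes do not read coordinate j
        apply Finset.inf_congr rfl
        intro jj hjj
        simp only [Finset.mem_Icc] at hjj
        refine (coord_flip j x _ (by omega) ?_).symm
        intro heq
        rcases lt_or_gt_of_ne hii with h | h
        · have h1 := hs i' hi'.1 (by omega)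
          have h2 := hsmono i' (i - 1) (by omega) (by omega)
          omega
        · have h2 := hsmono i (i' - 1) (by omega) (by omega)
          omega
    -- counting
    have hcard : (Finset.univ.filter fun x : Fin n → Bool =>
        tribesFn n r k x ≠ tribesFn n r k (flipCoord n j x)).card ≤ 2 ^ (n - (K - 1)) := by
      calc _ ≤ (Finset.univ.filter fun x : Fin n → Bool => ∀ q ∈ T, x q = true).card :=
            Finset.card_le_card hsub
        _ = 2 ^ (n - T.card) := count_all_true n T
        _ = 2 ^ (n - (K - 1)) := by rw [hTcard]
    have hKn : K ≤ n := by omega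
    have h2n : (0 : ℝ) < 2 ^ n := by positivity
    have hmul : (2 : ℝ) ^ (1 - (K : ℤ)) * 2 ^ n = 2 ^ (n - (K - 1)) := by
      rw [← zpow_natCast (2 : ℝ) n, ← zpow_natCast (2 : ℝ) (n - (K - 1)),
        ← zpow_add₀ (two_ne_zero)]
      congr 1
      omega
    have hle : influence n (tribesFn n r k) j ≤ (2 : ℝ) ^ (1 - (K : ℤ)) := by
      unfold influence
      rw [div_le_iff₀ h2n, hmul]
      exact_mod_cast hcard
    calc influence n (tribesFn n r k) j ≤ (2 : ℝ) ^ (1 - (K : ℤ)) := hle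
      _ < a (s i) := hstrict
      _ ≤ a ((j : ℕ) + 1) := hamono _ _ (by omega) hip hsin
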